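/- For every object M of Prefrag FR, the unit r_M : M → φ(ψ(M)) of the adjunction ψ ⊣ φ has surjective components r_M(λ) : M(λ) → φ(ψ(M))(λ) for all λ ∈ Λ; consequently r_M is an epimorphism in Mod FF_Λ R and the sequence 0 → ker(r_M) → M → φ(ψ(M)) → 0 is a short exact sequence in Mod FF_Λ R all of whose terms lie in Prefrag FR. -/

import Mathlib

set_option linter.unusedSectionVars false
set_option maxHeartbeats 1000000
set_option synthInstance.maxHeartbeats 1000000
set_option maxHeartbeats 2000000

noncomputable section

open CategoryTheory CategoryTheory.Limits

universe u

namespace GliderPaper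

/-- A `Γ`-filtration `FR` on a unital ring `R`: additive subgroups `F γ` with
`1 ∈ F 1`, monotone in `γ`, and multiplicative. -/
structure RingFiltration (Γ : Type u) [Group Γ] [PartialOrder Γ] (R : Type u) [Ring R] where
  F : Γ → AddSubgroup R
  one_mem : (1 : R) ∈ F 1
  mono : ∀ {α β : Γ}, α ≤ β → F α ≤ F β
  mul_mem : ∀ {α β : Γ} {a b : R}, a ∈ F α → b ∈ F β → a * b ∈ F (α * β)

variable {Γ : Type u} [Group Γ] [PartialOrder Γ]
  [CovariantClass Γ Γ (· * ·) (· ≤ ·)] [CovariantClass Γ Γ (Function.swap (· * ·)) (· ≤ ·)]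
  {R : Type u} [Ring R]

/-- Objects of the extended filtered companion category `oFF_Λ R`:
the disjoint union `Λ ⊔ {∞}`. -/
inductive OFF (FR : RingFiltration Γ R) (Λ : Set Γ) : Type u
  | of (α : Λ)
  | infty

/-- Objects of the filtered companion category `FF_Λ R`: the set `Λ`. -/
inductive FF (FR : RingFiltration Γ R) (Λ : Set Γ) : Type u
  | of (α : Λ)

variable (FR : RingFiltration Γ R) (Λ : Set Γ)

namespace OFF

/-- `le X Y` holds iff the canonical morphism `1_{X,Y}` is defined, i.e. `X ≤ Y` in `Λ`,
or `Y = ∞`. -/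
def le : OFF FR Λ → OFF FR Λ → Prop
  | of α, of β => (α : Γ) ≤ (β : Γ)
  | _, infty => True
  | infty, of _ => False

open scoped Classical in
/-- The additive subgroup of `R` of morphisms `X ⟶ Y` in `oFF_Λ R`:
`Hom(α,β) = F_{βα⁻¹}R` for `α ≤ β` in `Λ`, `Hom(X,∞) = R`, and `0` otherwise. -/
noncomputable def homGrp : OFF FR Λ → OFF FR Λ → AddSubgroup R
  | of α, of β => if (α : Γ) ≤ (β : Γ) then FR.F ((β : Γ) * (α : Γ)⁻¹) else ⊥
  | _, infty => ⊤
  | infty, of _ => ⊥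

theorem le_refl' : ∀ X : OFF FR Λ, le FR Λ X X
  | of _ => _root_.le_refl _
  | infty => trivial

theorem one_mem_homGrp : ∀ {X Y : OFF FR Λ}, le FR Λ X Y → (1 : R) ∈ homGrp FR Λ X Y
  | of α, of β, h => by
      have h' : (α : Γ) ≤ (β : Γ) := h
      have h1 : (1 : Γ) ≤ (β : Γ) * (α : Γ)⁻¹ := by
        rw [← mul_inv_cancel (α : Γ)]
        exact mul_le_mul' h' le_rfl
      simpa [homGrp, if_pos h'] using FR.mono h1 FR.one_mem
  | of _, infty, _ => trivial
  | infty, infty, _ => trivial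
  | infty, of _, h => h.elim

theorem mul_mem_homGrp : ∀ {X Y Z : OFF FR Λ} {f g : R},
    f ∈ homGrp FR Λ X Y → g ∈ homGrp FR Λ Y Z → g * f ∈ homGrp FR Λ X Z := by
  intro X Y Z f g hf hg
  cases X <;> cases Y <;> cases Z <;> simp only [homGrp] at hf hg ⊢ <;> try trivial
  case of.of.of a b c =>
    by_cases hab : (a : Γ) ≤ (b : Γ)
    · by_cases hbc : (b : Γ) ≤ (c : Γ)
      · rw [if_pos hab] at hf
        rw [if_pos hbc] at hg
        rw [if_pos (le_trans hab hbc)]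
        have := FR.mul_mem hg hf
        rwa [show (c : Γ) * (b : Γ)⁻¹ * ((b : Γ) * (a : Γ)⁻¹) = (c : Γ) * (a : Γ)⁻¹ by
          group] at this
      · rw [if_neg hbc] at hg
        rw [AddSubgroup.mem_bot] at hg
        subst hg
        simp only [zero_mul]
        exact AddSubgroup.zero_mem _
    · rw [if_neg hab] at hf
      rw [AddSubgroup.mem_bot] at hf
      subst hf
      simp only [mul_zero]
      exact AddSubgroup.zero_mem _
  case of.infty.of a c =>
    rw [AddSubgroup.mem_bot] at hg
    subst hg
    simp only [zero_mul]
    exact AddSubgroup.zero_mem _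
  case infty.of.of b c =>
    rw [AddSubgroup.mem_bot] at hf
    subst hf
    simp only [mul_zero]
    exact AddSubgroup.zero_mem _
  case infty.infty.of c =>
    rw [AddSubgroup.mem_bot] at hg
    subst hg
    simp only [zero_mul]
    exact AddSubgroup.zero_mem _

instance : Category (OFF FR Λ) where
  Hom X Y := homGrp FR Λ X Y
  id X := ⟨1, one_mem_homGrp FR Λ (le_refl' FR Λ X)⟩
  comp f g := ⟨g.1 * f.1, mul_mem_homGrp FR Λ f.2 g.2⟩
  id_comp f := Subtype.ext (mul_one f.1)
  comp_id f := Subtype.ext (one_mul f.1)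
  assoc f g h := Subtype.ext (mul_assoc h.1 g.1 f.1).symm

instance : Preadditive (OFF FR Λ) where
  homGroup X Y := inferInstanceAs (AddCommGroup (homGrp FR Λ X Y))
  add_comp _ _ _ f f' g := Subtype.ext (mul_add g.1 f.1 f'.1)
  comp_add _ _ _ f g g' := Subtype.ext (add_mul g.1 g'.1 f.1)

end OFF

namespace FF

/-- The inclusion of the objects of `FF_Λ R` into those of `oFF_Λ R`. -/
def toOFF : FF FR Λ → OFF FR Λ
  | of α => .of α

instance : Category (FF FR Λ) where
  Hom X Y := OFF.homGrp FR Λ (toOFF FR Λ X) (toOFF FR Λ Y)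
  id X := ⟨1, OFF.one_mem_homGrp FR Λ (OFF.le_refl' FR Λ _)⟩
  comp f g := ⟨g.1 * f.1, OFF.mul_mem_homGrp FR Λ f.2 g.2⟩
  id_comp f := Subtype.ext (mul_one f.1)
  comp_id f := Subtype.ext (one_mul f.1)
  assoc f g h := Subtype.ext (mul_assoc h.1 g.1 f.1).symm

instance : Preadditive (FF FR Λ) where
  homGroup X Y := inferInstanceAs (AddCommGroup (OFF.homGrp FR Λ (toOFF FR Λ X) (toOFF FR Λ Y)))
  add_comp _ _ _ f f' g := Subtype.ext (mul_add g.1 f.1 f'.1)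
  comp_add _ _ _ f g g' := Subtype.ext (add_mul g.1 g'.1 f.1)

end FF

/-- The inclusion functor `j : FF_Λ R ⥤ oFF_Λ R`. -/
def jF : FF FR Λ ⥤ OFF FR Λ where
  obj := FF.toOFF FR Λ
  map f := f
  map_id _ := rfl
  map_comp _ _ := rfl

instance : (jF FR Λ).Additive := ⟨rfl⟩

/-- `Mod C`: the category of additive functors from `C` to abelian groups. -/
abbrev Mod (C : Type u) [Category.{u} C] [Preadditive C] : Type (u + 1) :=
  C ⥤+ AddCommGrpCat.{u}

/-- The component at `X` of a morphism in `Mod C`. -/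
def mapp {C : Type u} [Category.{u} C] [Preadditive C] {M N : Mod C} (f : M ⟶ N) (X : C) :
    M.obj.obj X ⟶ N.obj.obj X :=
  (show M.obj ⟶ N.obj from f.hom).app X

/-- The canonical morphism `1_{X,Y}` in `oFF_Λ R`, given by `1_R`. -/
def unitHom (X Y : OFF FR Λ) (h : OFF.le FR Λ X Y) : X ⟶ Y :=
  ⟨1, OFF.one_mem_homGrp FR Λ h⟩

/-- The canonical morphism `1_{α,β}` in `FF_Λ R`, given by `1_R`. -/
def unitHomFF (α β : Λ) (h : (α : Γ) ≤ (β : Γ)) : (FF.of α : FF FR Λ) ⟶ FF.of β :=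
  unitHom FR Λ (.of α) (.of β) h

/-- A module `M` over `oFF_Λ R` is a preglider if all the maps `M(1_{X,Y})` are injective. -/
def IsPreglider (M : Mod (OFF FR Λ)) : Prop :=
  ∀ (X Y : OFF FR Λ) (h : OFF.le FR Λ X Y), Function.Injective (M.obj.map (unitHom FR Λ X Y h))

/-- A module `M` over `FF_Λ R` is a prefragment if all the maps `M(1_{α,β})` are injective. -/
def IsPrefragment (M : Mod (FF FR Λ)) : Prop :=
  ∀ (α β : Λ) (h : (α : Γ) ≤ (β : Γ)), Function.Injective (M.obj.map (unitHomFF FR Λ α β h))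

/-- The category of pregliders: the full subcategory of `Mod (oFF_Λ R)` of pregliders. -/
abbrev Preglid : Type (u + 1) :=
  ObjectProperty.FullSubcategory (fun M : Mod (OFF FR Λ) => IsPreglider FR Λ M)

instance : Preadditive (Preglid FR Λ) := Preadditive.inducedCategory _

/-- The category of prefragments: the full subcategory of `Mod (FF_Λ R)` of prefragments. -/
abbrev Prefrag : Type (u + 1) :=
  ObjectProperty.FullSubcategory (fun M : Mod (FF FR Λ) => IsPrefragment FR Λ M)

instance : Preadditive (Prefrag FR Λ) := Preadditive.inducedCategory _

/-- The inclusion `Preglid FR Λ ⥤ Mod (oFF_Λ R)`. -/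
def iotaF : Preglid FR Λ ⥤ Mod (OFF FR Λ) := ObjectProperty.ι _

/-- The inclusion `Prefrag FR Λ ⥤ Mod (FF_Λ R)`. -/
def etaF : Prefrag FR Λ ⥤ Mod (FF FR Λ) := ObjectProperty.ι _

/-- The component at `X` of a morphism of pregliders. -/
def pgapp {M N : Preglid FR Λ} (f : M ⟶ N) (X : OFF FR Λ) :
    M.obj.obj.obj X ⟶ N.obj.obj.obj X :=
  mapp (show M.obj ⟶ N.obj from f.hom) X

/-- The component at `X` of a morphism of prefragments. -/
def pfapp {M N : Prefrag FR Λ} (f : M ⟶ N) (X : FF FR Λ) :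
    M.obj.obj.obj X ⟶ N.obj.obj.obj X :=
  mapp (show M.obj ⟶ N.obj from f.hom) X

/-- The class `Σ` of morphisms of pregliders all of whose components at objects of `Λ`
are isomorphisms. -/
def SigmaClass : MorphismProperty (Preglid FR Λ) :=
  fun _ _ f => ∀ α : Λ, IsIso (pgapp FR Λ f (.of α))

/-- The category of glider representations: the localization of `Preglid FR Λ` at `Σ`. -/
abbrev Glid : Type (u + 1) := (SigmaClass FR Λ).Localization

/-- The localization functor `Q : Preglid FR Λ ⥤ Glid FR Λ`. -/
def QF : Preglid FR Λ ⥤ Glid FR Λ := (SigmaClass FR Λ).Q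

/-- The restriction functor `j^* : Mod (oFF_Λ R) ⥤ Mod (FF_Λ R)`. -/
def jStar : Mod (OFF FR Λ) ⥤ Mod (FF FR Λ) where
  obj M := ⟨jF FR Λ ⋙ M.obj, by haveI := M.property; show (jF FR Λ ⋙ M.obj).Additive; infer_instance⟩
  map {M N} f := ⟨Functor.whiskerLeft (jF FR Λ) (show M.obj ⟶ N.obj from f.hom)⟩
  map_id _ := rfl
  map_comp _ _ := rfl

theorem isPrefragment_jStar (M : Mod (OFF FR Λ)) (hM : IsPreglider FR Λ M) :
    IsPrefragment FR Λ ((jStar FR Λ).obj M) :=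
  fun α β h => hM (.of α) (.of β) h

/-- The restriction functor `j^* : Preglid FR Λ ⥤ Prefrag FR Λ`. -/
def jRes : Preglid FR Λ ⥤ Prefrag FR Λ where
  obj M := ⟨(jStar FR Λ).obj M.obj, isPrefragment_jStar FR Λ M.obj M.property⟩
  map f := ⟨(jStar FR Λ).map f.hom⟩
  map_id M := by ext1; exact (jStar FR Λ).map_id M.obj
  map_comp f g := by ext1; exact (jStar FR Λ).map_comp f.hom g.hom

theorem sigma_isInvertedBy : (SigmaClass FR Λ).IsInvertedBy (jRes FR Λ) := by
  intro M N f hf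
  haveI : (AdditiveFunctor.forget (FF FR Λ) AddCommGrpCat.{u}).Faithful :=
    inferInstance
  haveI : ∀ X : FF FR Λ, IsIso
      (((ObjectProperty.ι (fun M : Mod (FF FR Λ) => IsPrefragment FR Λ M) ⋙
        AdditiveFunctor.forget _ _).map ((jRes FR Λ).map f)).app X) := by
    rintro ⟨α⟩
    exact hf α
  haveI : IsIso ((ObjectProperty.ι (fun M : Mod (FF FR Λ) => IsPrefragment FR Λ M) ⋙
      AdditiveFunctor.forget _ _).map ((jRes FR Λ).map f)) :=
    NatIso.isIso_of_isIso_app _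
  exact isIso_of_reflects_iso ((jRes FR Λ).map f)
    (ObjectProperty.ι (fun M : Mod (FF FR Λ) => IsPrefragment FR Λ M) ⋙
      AdditiveFunctor.forget _ _)

/-- The canonical fully faithful functor `φ : Glid FR Λ ⥤ Prefrag FR Λ`,
the unique functor with `Q ⋙ φ = j^*`. -/
def phiF : Glid FR Λ ⥤ Prefrag FR Λ :=
  Localization.Construction.lift (jRes FR Λ) (sigma_isInvertedBy FR Λ)

theorem phiF_fac : QF FR Λ ⋙ phiF FR Λ = jRes FR Λ :=
  Localization.Construction.fac _ _



section Aux

/-! ### Auxiliary subfunctor machinery -/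

/-- A subfunctor of a functor to `AddCommGrp`, given by a family of subgroups closed
under the action of all maps. -/
def subFunctor {C : Type u} [Category.{u} C] (F : C ⥤ AddCommGrpCat.{u})
    (S : ∀ X : C, AddSubgroup (F.obj X))
    (hS : ∀ {X Y : C} (f : X ⟶ Y), ∀ x ∈ S X, F.map f x ∈ S Y) : C ⥤ AddCommGrpCat.{u} where
  obj X := AddCommGrpCat.of (S X)
  map {X Y} f := AddCommGrpCat.ofHom
    (((F.map f).hom.comp (S X).subtype).codRestrict (S Y) fun x => hS f x.1 x.2)
  map_id X := by
    ext x
    simp [AddCommGrpCat.ofHom]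
  map_comp {X Y Z} f g := by
    ext x
    simp [AddCommGrpCat.ofHom]
    rfl

@[simp]
theorem subFunctor_map_apply {C : Type u} [Category.{u} C] (F : C ⥤ AddCommGrpCat.{u})
    (S : ∀ X : C, AddSubgroup (F.obj X))
    (hS : ∀ {X Y : C} (f : X ⟶ Y), ∀ x ∈ S X, F.map f x ∈ S Y)
    {X Y : C} (f : X ⟶ Y) (x : (subFunctor F S hS).obj X) :
    (S Y).subtype (((subFunctor F S hS).map f) x) = F.map f ((S X).subtype x) := rfl

instance subFunctor_additive {C : Type u} [Category.{u} C] [Preadditive C]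
    (F : C ⥤ AddCommGrpCat.{u}) [F.Additive]
    (S : ∀ X : C, AddSubgroup (F.obj X))
    (hS : ∀ {X Y : C} (f : X ⟶ Y), ∀ x ∈ S X, F.map f x ∈ S Y) :
    (subFunctor F S hS).Additive where
  map_add {X Y f g} := by
    ext x
    refine Subtype.ext ?_
    show F.map (f + g) ((S X).subtype x)
      = F.map f ((S X).subtype x) + F.map g ((S X).subtype x)
    rw [F.map_add]
    rfl

/-- The inclusion of a subfunctor. -/
def subFunctorInc {C : Type u} [Category.{u} C] (F : C ⥤ AddCommGrpCat.{u})
    (S : ∀ X : C, AddSubgroup (F.obj X))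
    (hS : ∀ {X Y : C} (f : X ⟶ Y), ∀ x ∈ S X, F.map f x ∈ S Y) :
    subFunctor F S hS ⟶ F where
  app X := AddCommGrpCat.ofHom (S X).subtype
  naturality X Y f := by
    ext x
    rfl

end Aux

section Proof13

variable {Γ : Type u} [Group Γ] [PartialOrder Γ]
  [CovariantClass Γ Γ (· * ·) (· ≤ ·)] [CovariantClass Γ Γ (Function.swap (· * ·)) (· ≤ ·)]
  {R : Type u} [Ring R]

variable (FR : RingFiltration Γ R) (Λ : Set Γ)

/-- In `OFF`, any morphism out of `∞` into an object of `Λ` is zero. -/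
theorem infty_hom_eq_zero {β : Λ} (f : (OFF.infty : OFF FR Λ) ⟶ OFF.of β) : f = 0 := by
  have hf : (f : ↥(OFF.homGrp FR Λ OFF.infty (OFF.of β))).1 ∈ (⊥ : AddSubgroup R) := by
    have := (f : ↥(OFF.homGrp FR Λ OFF.infty (OFF.of β))).2
    simpa [OFF.homGrp] using this
  rw [AddSubgroup.mem_bot] at hf
  exact Subtype.ext hf

section SubOFF

variable (P : Preglid FR Λ) (M : Prefrag FR Λ) (rbar : M ⟶ (jRes FR Λ).obj P)

/-- The family of subgroups of `P` given by the images of `rbar` at objects of `Λ`, and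
everything at `∞`. -/
def rangeSub : ∀ X : OFF FR Λ, AddSubgroup (P.obj.obj.obj X)
  | .of α => (pfapp FR Λ rbar (FF.of α)).hom.range
  | .infty => ⊤

theorem rangeSub_closed : ∀ {X Y : OFF FR Λ} (f : X ⟶ Y),
    ∀ x ∈ rangeSub FR Λ P M rbar X, P.obj.obj.map f x ∈ rangeSub FR Λ P M rbar Y := by
  haveI : P.obj.obj.Additive := P.obj.property
  rintro X Y f x hx
  cases Y with
  | infty => exact AddSubgroup.mem_top _
  | of β =>
    cases X with
    | infty =>
      rw [infty_hom_eq_zero FR Λ f]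
      rw [Functor.map_zero]
      exact (rangeSub FR Λ P M rbar (OFF.of β)).zero_mem
    | of α =>
      obtain ⟨y, rfl⟩ := hx
      refine ⟨(M.obj.obj.map (show (FF.of α : FF FR Λ) ⟶ FF.of β from f)) y, ?_⟩
      have hnat := (show M.obj.obj ⟶ ((jRes FR Λ).obj P).obj.obj from rbar.hom.hom).naturality
        (show (FF.of α : FF FR Λ) ⟶ FF.of β from f)
      exact congrArg (fun (g : M.obj.obj.obj (FF.of α) ⟶ _) => g y) hnat

/-- The sub-preglider of `P` given by the image of `rbar` (everything at `∞`). -/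
def Wglid : Preglid FR Λ :=
  ⟨⟨subFunctor P.obj.obj (rangeSub FR Λ P M rbar) (rangeSub_closed FR Λ P M rbar),
    by haveI : P.obj.obj.Additive := P.obj.property; exact subFunctor_additive _ _ _⟩,
    by
      intro X Y h a b hab
      refine Subtype.ext (P.property X Y h ?_)
      exact congrArg Subtype.val hab⟩

/-- The inclusion of `Wglid` into `P` as a morphism of pregliders. -/
def Winc : Wglid FR Λ P M rbar ⟶ P :=
  ⟨⟨subFunctorInc P.obj.obj (rangeSub FR Λ P M rbar) (rangeSub_closed FR Λ P M rbar)⟩⟩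

/-- The corestriction of `rbar` to the image subfunctor. -/
def rCor : M ⟶ (jRes FR Λ).obj (Wglid FR Λ P M rbar) := ⟨⟨{
  app X :=
    match X with
    | .of α => AddCommGrpCat.ofHom
        ((pfapp FR Λ rbar (FF.of α)).hom.codRestrict
          ((pfapp FR Λ rbar (FF.of α)).hom.range) (fun x => ⟨x, rfl⟩))
  naturality {X Y} f := by
    cases X with
    | of α =>
      cases Y with
      | of β =>
        ext x
        refine Subtype.ext ?_
        have hnat := (show M.obj.obj ⟶ ((jRes FR Λ).obj P).obj.obj from rbar.hom.hom).naturality f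
        exact congrArg (fun (g : M.obj.obj.obj (FF.of α) ⟶ _) => g x) hnat }⟩⟩

theorem rCor_comp_Winc :
    rCor FR Λ P M rbar ≫ (jRes FR Λ).map (Winc FR Λ P M rbar) = rbar := by
  ext1; ext1
  refine NatTrans.ext (funext fun X => ?_)
  cases X with
  | of α => exact AddCommGrpCat.ext fun x => rfl

end SubOFF

end Proof13


section MainAux

variable {Γ : Type u} [Group Γ] [PartialOrder Γ]
  [CovariantClass Γ Γ (· * ·) (· ≤ ·)] [CovariantClass Γ Γ (Function.swap (· * ·)) (· ≤ ·)]
  {R : Type u} [Ring R]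

variable (FR : RingFiltration Γ R) (Λ : Set Γ)

/-- If the inclusion of the image subfunctor is split epi, then `rbar` is surjective
at every object of `Λ`. -/
theorem rbar_surjective (P : Preglid FR Λ) (M : Prefrag FR Λ)
    (rbar : M ⟶ (jRes FR Λ).obj P)
    (s : (jRes FR Λ).obj P ⟶ (jRes FR Λ).obj (Wglid FR Λ P M rbar))
    (hs : s ≫ (jRes FR Λ).map (Winc FR Λ P M rbar) = 𝟙 ((jRes FR Λ).obj P))
    (α : Λ) : Function.Surjective (pfapp FR Λ rbar (FF.of α)) := by
  intro y
  have h := congrArg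
    (fun (g : (jRes FR Λ).obj P ⟶ (jRes FR Λ).obj P) => pfapp FR Λ g (FF.of α) y) hs
  have hz : (rangeSub FR Λ P M rbar (OFF.of α)).subtype (pfapp FR Λ s (FF.of α) y)
      ∈ (pfapp FR Λ rbar (FF.of α)).hom.range :=
    SetLike.coe_mem (p := rangeSub FR Λ P M rbar (OFF.of α)) (pfapp FR Λ s (FF.of α) y)
  obtain ⟨x, hx⟩ := hz
  exact ⟨x, hx.trans h⟩

/-- Componentwise surjective maps in `Mod (FF FR Λ)` are epimorphisms. -/
theorem epi_of_surjective {M N : Mod (FF FR Λ)} (u : M ⟶ N)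
    (hu : ∀ X : FF FR Λ, Function.Surjective (mapp u X)) : Epi u := by
  constructor
  intro Z w₁ w₂ h
  ext1
  refine NatTrans.ext (funext fun X => AddCommGrpCat.ext fun y => ?_)
  obtain ⟨x, rfl⟩ := hu X y
  exact congrArg (fun (g : M ⟶ Z) => mapp g X x) h

theorem kerSub_closed {M N : Prefrag FR Λ} (u : M ⟶ N) :
    ∀ {X Y : FF FR Λ} (f : X ⟶ Y),
      ∀ x ∈ (pfapp FR Λ u X).hom.ker, M.obj.obj.map f x ∈ (pfapp FR Λ u Y).hom.ker := by
  intro X Y f x hx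
  rw [AddMonoidHom.mem_ker] at hx ⊢
  have hnat := congrArg (fun (g : M.obj.obj.obj X ⟶ N.obj.obj.obj Y) => g x)
    ((show M.obj.obj ⟶ N.obj.obj from u.hom.hom).naturality f)
  calc pfapp FR Λ u Y (M.obj.obj.map f x)
      = N.obj.obj.map f (pfapp FR Λ u X x) := hnat
    _ = 0 := by rw [hx]; exact (N.obj.obj.map f).hom.map_zero

/-- The kernel of a morphism of prefragments, as a prefragment. -/
def kerPrefrag {M N : Prefrag FR Λ} (u : M ⟶ N) : Prefrag FR Λ :=
  ⟨⟨subFunctor M.obj.obj (fun X => (pfapp FR Λ u X).hom.ker) (kerSub_closed FR Λ u),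
    by haveI : M.obj.obj.Additive := M.obj.property; exact subFunctor_additive _ _ _⟩,
    by
      intro α β hle a b hab
      refine Subtype.ext (M.property α β hle ?_)
      exact congrArg Subtype.val hab⟩

/-- The inclusion of the kernel prefragment. -/
def kerPrefragInc {M N : Prefrag FR Λ} (u : M ⟶ N) : kerPrefrag FR Λ u ⟶ M :=
  ⟨⟨subFunctorInc M.obj.obj (fun X => (pfapp FR Λ u X).hom.ker) (kerSub_closed FR Λ u)⟩⟩

theorem kerPrefragInc_injective {M N : Prefrag FR Λ} (u : M ⟶ N) (X : FF FR Λ) :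
    Function.Injective (pfapp FR Λ (kerPrefragInc FR Λ u) X) :=
  fun _ _ hab => Subtype.ext hab

theorem kerPrefrag_range {M N : Prefrag FR Λ} (u : M ⟶ N) (X : FF FR Λ)
    (y : M.obj.obj.obj X) :
    pfapp FR Λ u X y = 0 ↔ y ∈ Set.range (pfapp FR Λ (kerPrefragInc FR Λ u) X) := by
  constructor
  · intro hy
    exact ⟨(⟨y, AddMonoidHom.mem_ker.mpr hy⟩ : ((pfapp FR Λ u X).hom.ker : AddSubgroup _)), rfl⟩
  · rintro ⟨x, rfl⟩
    exact AddMonoidHom.mem_ker.mp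
      (SetLike.coe_mem (p := (pfapp FR Λ u X).hom.ker) x)

/-- The main surjectivity statement. -/
theorem unit_app_surjective
    (κ : Mod (OFF FR Λ) ⥤ Preglid FR Λ)
    (jbang : Mod (FF FR Λ) ⥤ Mod (OFF FR Λ))
    (adjPsi : ((etaF FR Λ ⋙ jbang ⋙ κ) ⋙ QF FR Λ) ⊣ phiF FR Λ)
    (M : Prefrag FR Λ) (α : Λ) :
    Function.Surjective (pfapp FR Λ (adjPsi.unit.app M) (FF.of α)) := by
  let P : Preglid FR Λ := κ.obj (jbang.obj ((etaF FR Λ).obj M))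
  have e' : (phiF FR Λ).obj ((QF FR Λ).obj P) = (jRes FR Λ).obj P :=
    Functor.congr_obj (phiF_fac FR Λ) P
  let r0 : M ⟶ (phiF FR Λ).obj ((QF FR Λ).obj P) := adjPsi.unit.app M
  let rbar : M ⟶ (jRes FR Λ).obj P := r0 ≫ eqToHom e'
  have e_W : (phiF FR Λ).obj ((QF FR Λ).obj (Wglid FR Λ P M rbar))
      = (jRes FR Λ).obj (Wglid FR Λ P M rbar) :=
    Functor.congr_obj (phiF_fac FR Λ) (Wglid FR Λ P M rbar)
  let r'' : M ⟶ (phiF FR Λ).obj ((QF FR Λ).obj (Wglid FR Λ P M rbar)) :=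
    rCor FR Λ P M rbar ≫ eqToHom e_W.symm
  let t : (QF FR Λ).obj P ⟶ (QF FR Λ).obj (Wglid FR Λ P M rbar) :=
    (adjPsi.homEquiv M ((QF FR Λ).obj (Wglid FR Λ P M rbar))).symm r''
  have hm : (phiF FR Λ).map ((QF FR Λ).map (Winc FR Λ P M rbar))
      = eqToHom e_W ≫ (jRes FR Λ).map (Winc FR Λ P M rbar) ≫ eqToHom e'.symm :=
    Functor.congr_hom (phiF_fac FR Λ) (Winc FR Λ P M rbar)
  have hkey : t ≫ (QF FR Λ).map (Winc FR Λ P M rbar) = 𝟙 ((QF FR Λ).obj P) := by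
    apply (adjPsi.homEquiv M ((QF FR Λ).obj P)).injective
    have hunit : (adjPsi.homEquiv M ((QF FR Λ).obj P)) (𝟙 ((QF FR Λ).obj P))
        = adjPsi.unit.app M := by
      rw [Adjunction.homEquiv_unit]
      simp
      erw [CategoryTheory.Functor.map_id, Category.comp_id]
    rw [Adjunction.homEquiv_naturality_right, Equiv.apply_symm_apply, hunit, hm]
    show (rCor FR Λ P M rbar ≫ eqToHom e_W.symm) ≫
        (eqToHom e_W ≫ (jRes FR Λ).map (Winc FR Λ P M rbar) ≫ eqToHom e'.symm)
        = adjPsi.unit.app M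
    rw [Category.assoc, eqToHom_trans_assoc, eqToHom_refl, Category.id_comp,
      ← Category.assoc, rCor_comp_Winc]
    show (r0 ≫ eqToHom e') ≫ eqToHom e'.symm = r0
    rw [Category.assoc, eqToHom_trans, eqToHom_refl, Category.comp_id]
  have hphi : (phiF FR Λ).map t ≫ (phiF FR Λ).map ((QF FR Λ).map (Winc FR Λ P M rbar))
      = 𝟙 ((phiF FR Λ).obj ((QF FR Λ).obj P)) := by
    rw [← CategoryTheory.Functor.map_comp, hkey, CategoryTheory.Functor.map_id]
  have hs : (eqToHom e'.symm ≫ (phiF FR Λ).map t ≫ eqToHom e_W) ≫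
      (jRes FR Λ).map (Winc FR Λ P M rbar) = 𝟙 ((jRes FR Λ).obj P) := by
    have hm' : (jRes FR Λ).map (Winc FR Λ P M rbar)
        = eqToHom e_W.symm ≫ (phiF FR Λ).map ((QF FR Λ).map (Winc FR Λ P M rbar))
          ≫ eqToHom e' := by
      rw [hm]
      simp [eqToHom_trans, eqToHom_refl]
    rw [hm']
    slice_lhs 3 4 => rw [eqToHom_trans, eqToHom_refl]
    simp only [Category.id_comp, Category.assoc]
    slice_lhs 2 3 => rw [hphi]
    simp [eqToHom_trans, eqToHom_refl]
  have hsurj := rbar_surjective FR Λ P M rbar _ hs α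
  have hq : eqToHom e' ≫ eqToHom e'.symm = 𝟙 ((phiF FR Λ).obj ((QF FR Λ).obj P)) := by
    simp [eqToHom_trans, eqToHom_refl]
  have hr0 : adjPsi.unit.app M = rbar ≫ eqToHom e'.symm := by
    show r0 = (r0 ≫ eqToHom e') ≫ eqToHom e'.symm
    rw [Category.assoc, hq, Category.comp_id]
  rw [hr0]
  intro y
  obtain ⟨x, hx⟩ := hsurj (pfapp FR Λ (eqToHom e') (FF.of α) y)
  exact ⟨x, (congrArg (pfapp FR Λ (eqToHom e'.symm) (FF.of α)) hx).trans
    (congrArg (fun (g : (phiF FR Λ).obj ((QF FR Λ).obj P) ⟶ (phiF FR Λ).obj ((QF FR Λ).obj P))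
      => pfapp FR Λ g (FF.of α) y) hq)⟩

end MainAux

section Statements

variable {Γ : Type u} [Group Γ] [PartialOrder Γ]
  [CovariantClass Γ Γ (· * ·) (· ≤ ·)] [CovariantClass Γ Γ (Function.swap (· * ·)) (· ≤ ·)]
  {R : Type u} [Ring R]

/-- For every object `M` of `Prefrag FR`, the unit
`r_M : M ⟶ φ(ψ(M))` of the adjunction `ψ ⊣ φ` has surjective components at every
`λ ∈ Λ`; consequently `r_M` is an epimorphism in `Mod FF_Λ R` and
`0 → ker r_M → M → φ(ψ(M)) → 0` is a (componentwise) short exact sequence in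
`Mod FF_Λ R` all of whose terms lie in `Prefrag FR`.  Here `κ ⊣ ι` and `j_! ⊣ j^*` are
arbitrary choices of adjunctions and `adjPsi : ψ ⊣ φ` with `ψ = Q∘κ∘j_!∘η` an arbitrary
witnessing adjunction. -/
theorem statement_13 (FR : RingFiltration Γ R) (Λ : Set Γ)
    (κ : Mod (OFF FR Λ) ⥤ Preglid FR Λ) (adjκ : κ ⊣ iotaF FR Λ)
    (jbang : Mod (FF FR Λ) ⥤ Mod (OFF FR Λ)) (adjjb : jbang ⊣ jStar FR Λ)
    (adjPsi : ((etaF FR Λ ⋙ jbang ⋙ κ) ⋙ QF FR Λ) ⊣ phiF FR Λ)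
    (M : Prefrag FR Λ) :
    (∀ α : Λ, Function.Surjective (pfapp FR Λ (adjPsi.unit.app M) (FF.of α))) ∧
    Epi ((ObjectProperty.ι _).map (adjPsi.unit.app M)) ∧
    ∃ (K : Prefrag FR Λ) (ι : K ⟶ M),
      (∀ X, Function.Injective (pfapp FR Λ ι X)) ∧
      (∀ X (y : M.obj.obj.obj X),
        pfapp FR Λ (adjPsi.unit.app M) X y = 0 ↔ y ∈ Set.range (pfapp FR Λ ι X)) := by
  have hsurj := unit_app_surjective FR Λ κ jbang adjPsi M
  refine ⟨hsurj, ?_, ?_⟩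
  · refine epi_of_surjective FR Λ _ ?_
    rintro ⟨α⟩
    exact hsurj α
  · exact ⟨kerPrefrag FR Λ (adjPsi.unit.app M), kerPrefragInc FR Λ (adjPsi.unit.app M),
      kerPrefragInc_injective FR Λ _, kerPrefrag_range FR Λ _⟩

end Statements

end GliderPaper
end
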